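/- Let H be a complex Hilbert space, 𝔩(H) the HP algebra on H, and 𝒜 ⊆ B(H) a subalgebra closed under adjoints containing an element E with E* = E and A∘E = A = E∘A for every A ∈ 𝒜. Then every a = (α, ζ, η, A) ∈ 𝔩(H) with A ∈ 𝒜 decomposes as a = b + c, where b := (0, ζ − Eζ, η − Eη, 0) and c := (α, Eζ, Eη, A), and this decomposition is orthogonal: b·c = 0 and c·b = 0 in 𝔩(H). Moreover, any two elements b₁ = (0,ζ₁,η₁,0), b₂ = (0,ζ₂,η₂,0) with Eζᵢ = 0 = Eηᵢ satisfy b₁·b₂ = ⟪η₁,ζ₂⟫·d_t (a quantum Brownian part), and the set 𝔠 := {(β, ξ, θ, B) : Eξ = ξ, Eθ = θ, B ∈ 𝒜} is closed under the product and the involution of 𝔩(H) (a quantum Lévy part). -/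

import Mathlib

open ComplexOrder

/-- The product of the HP (vacuum) Itô algebra `𝔩(H) = ℂ × H × H × B(H)`:
`(α,ζ,η,A)·(β,ζ',η',B) = (⟪η,ζ'⟫, Aζ', B*η, A∘B)`. -/
noncomputable def hpMul {H : Type} [NormedAddCommGroup H] [InnerProductSpace ℂ H]
    [CompleteSpace H] (a b : ℂ × H × H × (H →L[ℂ] H)) : ℂ × H × H × (H →L[ℂ] H) :=
  ((inner ℂ a.2.2.1 b.2.1 : ℂ), a.2.2.2 b.2.1,
    (ContinuousLinearMap.adjoint b.2.2.2) a.2.2.1, a.2.2.2.comp b.2.2.2)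

/-- The involution of the HP algebra: `(α,ζ,η,A)⋆ = (conj α, η, ζ, A*)`. -/
noncomputable def hpStar {H : Type} [NormedAddCommGroup H] [InnerProductSpace ℂ H]
    [CompleteSpace H] (a : ℂ × H × H × (H →L[ℂ] H)) : ℂ × H × H × (H →L[ℂ] H) :=
  (starRingEnd ℂ a.1, a.2.2.1, a.2.1, ContinuousLinearMap.adjoint a.2.2.2)

/-- The death element `d_t = (1,0,0,0)` of the HP algebra. -/
def hpDt (H : Type) [NormedAddCommGroup H] [InnerProductSpace ℂ H] [CompleteSpace H] :
    ℂ × H × H × (H →L[ℂ] H) := (1, 0, 0, 0)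

/-- Let `𝒜 ⊆ B(H)` be an adjoint-closed subalgebra with a self-adjoint
unit `E` (`A∘E = A = E∘A` on `𝒜`). Then every `a = (α,ζ,η,A)` with `A ∈ 𝒜` decomposes
orthogonally as `a = b + c` with `b = (0, ζ−Eζ, η−Eη, 0)`, `c = (α, Eζ, Eη, A)`,
`b·c = 0 = c·b`; elements supported outside `E` multiply as a quantum Brownian part
(`b₁·b₂ = ⟪η₁,ζ₂⟫·d_t`), and the Lévy part
`𝔠 = {(β,ξ,θ,B) : Eξ = ξ, Eθ = θ, B ∈ 𝒜}` is closed under product and involution. -/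
theorem hp_brownian_levy_decomposition
    (H : Type) [NormedAddCommGroup H] [InnerProductSpace ℂ H] [CompleteSpace H]
    (𝒜 : Set (H →L[ℂ] H))
    (hadd : ∀ A B, A ∈ 𝒜 → B ∈ 𝒜 → A + B ∈ 𝒜)
    (hsmul : ∀ (z : ℂ) (A), A ∈ 𝒜 → z • A ∈ 𝒜)
    (hcomp : ∀ A B, A ∈ 𝒜 → B ∈ 𝒜 → A.comp B ∈ 𝒜)
    (hadj : ∀ A, A ∈ 𝒜 → ContinuousLinearMap.adjoint A ∈ 𝒜)
    (E : H →L[ℂ] H) (hE : E ∈ 𝒜) (hEsa : ContinuousLinearMap.adjoint E = E)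
    (hunit : ∀ A, A ∈ 𝒜 → A.comp E = A ∧ E.comp A = A) :
    (∀ (α : ℂ) (ζ η : H) (A : H →L[ℂ] H), A ∈ 𝒜 →
      ((α, ζ, η, A) : ℂ × H × H × (H →L[ℂ] H))
          = ((0 : ℂ), ζ - E ζ, η - E η, (0 : H →L[ℂ] H)) + (α, E ζ, E η, A) ∧
      hpMul ((0 : ℂ), ζ - E ζ, η - E η, (0 : H →L[ℂ] H)) (α, E ζ, E η, A) = 0 ∧
      hpMul (α, E ζ, E η, A) ((0 : ℂ), ζ - E ζ, η - E η, (0 : H →L[ℂ] H)) = 0) ∧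
    (∀ ζ₁ η₁ ζ₂ η₂ : H, E ζ₁ = 0 → E η₁ = 0 → E ζ₂ = 0 → E η₂ = 0 →
      hpMul ((0 : ℂ), ζ₁, η₁, (0 : H →L[ℂ] H)) ((0 : ℂ), ζ₂, η₂, (0 : H →L[ℂ] H))
        = (inner ℂ η₁ ζ₂ : ℂ) • hpDt H) ∧
    (∀ a b : ℂ × H × H × (H →L[ℂ] H),
      (E a.2.1 = a.2.1 ∧ E a.2.2.1 = a.2.2.1 ∧ a.2.2.2 ∈ 𝒜) →
      (E b.2.1 = b.2.1 ∧ E b.2.2.1 = b.2.2.1 ∧ b.2.2.2 ∈ 𝒜) →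
      (E (hpMul a b).2.1 = (hpMul a b).2.1 ∧ E (hpMul a b).2.2.1 = (hpMul a b).2.2.1 ∧
        (hpMul a b).2.2.2 ∈ 𝒜) ∧
      (E (hpStar a).2.1 = (hpStar a).2.1 ∧ E (hpStar a).2.2.1 = (hpStar a).2.2.1 ∧
        (hpStar a).2.2.2 ∈ 𝒜)) := by

  have hEE : E.comp E = E := (hunit E hE).1
  refine ⟨?_, ?_, ?_⟩
  · intro α ζ η A hA
    have hAE : A.comp E = A := (hunit A hA).1
    have hAdjE : (ContinuousLinearMap.adjoint A).comp E = ContinuousLinearMap.adjoint A :=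
      (hunit _ (hadj A hA)).1
    refine ⟨by simp [Prod.ext_iff], ?_, ?_⟩
    · simp only [hpMul, Prod.ext_iff]
      refine ⟨?_, by simp, ?_, by simp⟩
      · have : (inner ℂ (η - E η) (E ζ) : ℂ) = inner ℂ (E (η - E η)) ζ := by
          rw [← hEsa, ContinuousLinearMap.adjoint_inner_left, hEsa]
        simp only [this, map_sub]
        have : E (E η) = E η := by
          rw [← ContinuousLinearMap.comp_apply, hEE]
        simp [this]
      · have : (ContinuousLinearMap.adjoint A) (E η) = (ContinuousLinearMap.adjoint A) η := by
          conv_rhs => rw [← hAdjE, ContinuousLinearMap.comp_apply]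
        simp [map_sub, this]
    · simp only [hpMul, Prod.ext_iff]
      refine ⟨?_, ?_, by simp, by simp⟩
      · have h1 : (inner ℂ (E η) (ζ - E ζ) : ℂ) = inner ℂ η (E (ζ - E ζ)) := by
          rw [← ContinuousLinearMap.adjoint_inner_left, hEsa]
        have h2 : E (E ζ) = E ζ := by
          rw [← ContinuousLinearMap.comp_apply, hEE]
        simp [h1, map_sub, h2]
      · have : A (E ζ) = A ζ := by
          conv_rhs => rw [← hAE]
          rfl
        simp [map_sub, this]
  · intro ζ₁ η₁ ζ₂ η₂ _ _ _ _
    simp [hpMul, hpDt, Prod.ext_iff]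
  · rintro a b ⟨ha1, ha2, ha3⟩ ⟨hb1, hb2, hb3⟩
    constructor
    · refine ⟨?_, ?_, hcomp _ _ ha3 hb3⟩
      · have : (E.comp a.2.2.2) b.2.1 = a.2.2.2 b.2.1 := by
          rw [(hunit _ ha3).2]
        exact this
      · have : (E.comp (ContinuousLinearMap.adjoint b.2.2.2)) a.2.2.1
            = (ContinuousLinearMap.adjoint b.2.2.2) a.2.2.1 := by
          rw [(hunit _ (hadj _ hb3)).2]
        exact this
    · exact ⟨ha2, ha1, hadj _ ha3⟩
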